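/- The set-valued map F : ℝ² ⇉ ℝ² defined by F(x) = ({x_1^{1/3}} + [-1, 0]) × ([-2,-1] ∪ [1,2]) if x_1 < 0 and F(x) = ({x_1^{1/3}} + [-1, 1]) × ([-2,-1] ∪ [1,2]) if x_1 ≥ 0 has compact values and satisfies the Weak Componentwise Monotonicity condition, but is not monotone (there exist x, y ∈ ℝ², v ∈ F(x), w ∈ F(y) with ⟨x - y, v - w⟩ < 0). -/

import Mathlib

open Pointwise
/-- The real cube root. -/
noncomputable def cbrt (t : ℝ) : ℝ := Real.sign t * |t| ^ ((1:ℝ)/3)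

lemma cbrt_of_nonneg {t : ℝ} (h : 0 ≤ t) : cbrt t = t ^ ((1:ℝ)/3) := by
  rcases eq_or_lt_of_le h with h0 | h0
  · simp [cbrt, ← h0, Real.zero_rpow (by norm_num : (1:ℝ)/3 ≠ 0)]
  · rw [cbrt, Real.sign_of_pos h0, abs_of_pos h0, one_mul]

lemma cbrt_of_neg {t : ℝ} (h : t < 0) : cbrt t = -((-t) ^ ((1:ℝ)/3)) := by
  rw [cbrt, Real.sign_of_neg h, abs_of_neg h, neg_one_mul]

lemma cbrt_mono : Monotone cbrt := by
  intro a b h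
  rcases le_or_gt 0 a with ha | ha
  · rw [cbrt_of_nonneg ha, cbrt_of_nonneg (ha.trans h)]
    exact Real.rpow_le_rpow ha h (by norm_num)
  · rcases le_or_gt 0 b with hb | hb
    · rw [cbrt_of_neg ha, cbrt_of_nonneg hb]
      have h1 : (0:ℝ) ≤ (-a) ^ ((1:ℝ)/3) := Real.rpow_nonneg (by linarith) _
      have h2 : (0:ℝ) ≤ b ^ ((1:ℝ)/3) := Real.rpow_nonneg hb _
      linarith
    · rw [cbrt_of_neg ha, cbrt_of_neg hb]
      have := Real.rpow_le_rpow (by linarith : (0:ℝ) ≤ -b) (by linarith : -b ≤ -a)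
        (by norm_num : (0:ℝ) ≤ 1/3)
      linarith

lemma cbrt_one : cbrt 1 = 1 := by
  rw [cbrt_of_nonneg zero_le_one, Real.one_rpow]

lemma cbrt_zero : cbrt 0 = 0 := by simp [cbrt]

lemma mem_singleton_add_sub {a v0 : ℝ} {s : Set ℝ} (h : v0 ∈ ({a} : Set ℝ) + s) :
    v0 - a ∈ s := by
  rw [Set.singleton_add] at h
  obtain ⟨b, hb, rfl⟩ := h
  simpa using hb

lemma sub_mem_singleton_add {a v0 : ℝ} {s : Set ℝ} (h : v0 - a ∈ s) :
    v0 ∈ ({a} : Set ℝ) + s := by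
  rw [Set.singleton_add]
  exact ⟨v0 - a, h, by ring⟩

theorem example_2d_compact_wcm_not_monotone :
    ∀ F : EuclideanSpace ℝ (Fin 2) → Set (EuclideanSpace ℝ (Fin 2)),
    (F = fun x => {v | v 0 ∈ (({cbrt (x 0)} : Set ℝ) +
                      (if x 0 < 0 then Set.Icc (-1:ℝ) 0 else Set.Icc (-1:ℝ) 1) : Set ℝ)
                    ∧ v 1 ∈ Set.Icc (-2:ℝ) (-1) ∪ Set.Icc (1:ℝ) 2}) →
    (∀ x, IsCompact (F x)) ∧
    (∀ x y, ∀ v ∈ F x, ∃ w ∈ F y, ∀ j : Fin 2, 0 ≤ (x j - y j) * (v j - w j)) ∧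
    (∃ x y, ∃ v ∈ F x, ∃ w ∈ F y, (inner ℝ (x - y) (v - w) : ℝ) < 0) := by
  intro F hF
  subst hF
  set B : Set ℝ := Set.Icc (-2:ℝ) (-1) ∪ Set.Icc (1:ℝ) 2 with hB
  refine ⟨?_, ?_, ?_⟩
  · -- compactness
    intro x
    set S : Set ℝ := ({cbrt (x 0)} : Set ℝ) +
      (if x 0 < 0 then Set.Icc (-1:ℝ) 0 else Set.Icc (-1:ℝ) 1) with hS
    have hScomp : IsCompact S := by
      rw [hS, Set.singleton_add]
      apply IsCompact.image _ (continuous_const.add continuous_id)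
      split <;> exact isCompact_Icc
    have hBcomp : IsCompact B := isCompact_Icc.union isCompact_Icc
    have h : IsCompact (Set.univ.pi ![S, B]) :=
      isCompact_univ_pi (by intro i; fin_cases i <;> simpa)
    clear_value S
    have := (EuclideanSpace.equiv (Fin 2) ℝ).toHomeomorph.isCompact_preimage.2 h
    convert this using 1
    ext v
    rw [hS]
    simp [Set.mem_univ_pi, Fin.forall_fin_two]
  · -- WCM
    intro x y v hv
    obtain ⟨hv0, hv1⟩ := hv
    -- bounds on v 0
    have hvlb : cbrt (x 0) - 1 ≤ v 0 := by
      have := mem_singleton_add_sub hv0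
      split at this <;> · have := this.1; linarith
    have hvub : v 0 ≤ cbrt (x 0) + (if x 0 < 0 then (0:ℝ) else 1) := by
      have h := mem_singleton_add_sub hv0
      rcases lt_or_ge (x 0) 0 with hx | hx
      · rw [if_pos hx] at h ⊢; linarith [h.2]
      · rw [if_neg (not_lt.2 hx)] at h ⊢; linarith [h.2]
    set w0 : ℝ := if y 0 < x 0 then cbrt (y 0) - 1
      else cbrt (y 0) + (if y 0 < 0 then 0 else 1) with hw0
    set w : EuclideanSpace ℝ (Fin 2) := (WithLp.equiv 2 (Fin 2 → ℝ)).symm ![w0, v 1] with hw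
    have hwa0 : w 0 = w0 := by simp [hw]
    have hwa1 : w 1 = v 1 := by simp [hw]
    refine ⟨w, ⟨?_, ?_⟩, ?_⟩
    · -- w 0 in the set for y
      rw [hwa0]
      apply sub_mem_singleton_add
      rw [hw0]
      split
      · split <;> · constructor <;> norm_num
      · split <;> · constructor <;> norm_num
    · rw [hwa1]; exact hv1
    · intro j
      fin_cases j
      · show 0 ≤ (x 0 - y 0) * (v 0 - w 0)
        rw [hwa0, hw0]
        rcases lt_trichotomy (y 0) (x 0) with hlt | heq | hgt
        · rw [if_pos hlt]
          have := cbrt_mono hlt.le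
          have : cbrt (y 0) - 1 ≤ v 0 := by linarith
          nlinarith
        · rw [heq]; simp
        · rw [if_neg (by linarith)]
          have hc := cbrt_mono hgt.le
          have hub : v 0 ≤ cbrt (y 0) + (if y 0 < 0 then (0:ℝ) else 1) := by
            rcases lt_or_ge (y 0) 0 with hy | hy
            · have hx : x 0 < 0 := hgt.trans hy
              rw [if_pos hy]
              rw [if_pos hx] at hvub
              linarith
            · rw [if_neg (not_lt.2 hy)]
              split at hvub <;> linarith
          nlinarith
      · show 0 ≤ (x 1 - y 1) * (v 1 - w 1)
        rw [hwa1]; simp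
  · -- not monotone
    set e := (WithLp.equiv 2 (Fin 2 → ℝ)).symm
    refine ⟨e ![1, 0], e ![0, 0], e ![0, 1], ?_, e ![1, 1], ?_, ?_⟩
    · constructor
      · have h1 : (e ![1, 0] : EuclideanSpace ℝ (Fin 2)) 0 = 1 := by simp [e]
        have h2 : (e ![0, 1] : EuclideanSpace ℝ (Fin 2)) 0 = 0 := by simp [e]
        rw [h1, h2, if_neg (by norm_num), cbrt_one]
        exact sub_mem_singleton_add (by norm_num)
      · have h2 : (e ![0, 1] : EuclideanSpace ℝ (Fin 2)) 1 = 1 := by simp [e]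
        rw [h2]; right; constructor <;> norm_num
    · constructor
      · have h1 : (e ![0, 0] : EuclideanSpace ℝ (Fin 2)) 0 = 0 := by simp [e]
        have h2 : (e ![1, 1] : EuclideanSpace ℝ (Fin 2)) 0 = 1 := by simp [e]
        rw [h1, h2, if_neg (by norm_num), cbrt_zero]
        exact sub_mem_singleton_add (by norm_num)
      · have h2 : (e ![1, 1] : EuclideanSpace ℝ (Fin 2)) 1 = 1 := by simp [e]
        rw [h2]; right; constructor <;> norm_num
    · have : (inner ℝ (e ![1,0] - e ![0,0]) (e ![0,1] - e ![1,1]) : ℝ) = -1 := by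
        simp [e, PiLp.inner_apply, Fin.sum_univ_two]
      rw [this]; norm_num
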